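/- arXiv:2110.14489 — 4 statements merged into one kernel-verified Lean document; each statement's English description precedes it below -/
import Mathlib

section
/- Let e be a real number with 0 ≤ e < 1, set η = √(1 − e²), let k be a natural number and ν a real number. Then (1/(2π)) · ∫₀^{2π} cos(k·f + ν) · η³/(1 + e·cos f)² df = (−e)^k · (1 + k·η)/(1 + η)^k · cos ν. -/
open Real intervalIntegral

noncomputable def kozC (e : ℝ) (n : ℕ) : ℝ :=
  ∫ f in (0:ℝ)..(2*Real.pi), Real.cos ((n:ℝ)*f) / (1+e*Real.cos f)^2

noncomputable def kozB (e η : ℝ) (n : ℕ) : ℝ :=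
  2*Real.pi*((-e)^n*(1+(n:ℝ)*η))/(η^3*(1+η)^n)

lemma koz_pos {e : ℝ} (he0 : 0 ≤ e) (he1 : e < 1) (y : ℝ) : 0 < 1 + e * Real.cos y := by
  nlinarith [Real.neg_one_le_cos y, Real.cos_le_one y]

lemma koz_cont {e : ℝ} (hd : ∀ y : ℝ, 0 < 1 + e * Real.cos y) (a : ℝ) :
    Continuous fun f => Real.cos (a*f) / (1+e*Real.cos f)^2 := by
  apply Continuous.div (by fun_prop) (by fun_prop)
  exact fun x => pow_ne_zero 2 (ne_of_gt (hd x))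

lemma koz_intg {e : ℝ} (hd : ∀ y : ℝ, 0 < 1 + e * Real.cos y) (c : ℝ) (n : ℕ) :
    IntervalIntegrable (fun f => c * (Real.cos ((n:ℝ)*f) / (1+e*Real.cos f)^2))
      MeasureTheory.volume 0 (2*Real.pi) :=
  (continuous_const.mul (koz_cont hd _)).intervalIntegrable _ _

lemma arctan_deriv (β : ℝ) (hβ : |β| < 1) (x : ℝ) :
    HasDerivAt (fun x => x - 2 * Real.arctan (β * Real.sin x / (1 + β * Real.cos x)))
      ((1 - β^2) / (1 + β^2 + 2*β*Real.cos x)) x := by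
  have hd : ∀ y : ℝ, 0 < 1 + β * Real.cos y := by
    intro y
    have h1 : |β * Real.cos y| ≤ |β| := by
      rw [abs_mul]
      exact mul_le_of_le_one_right (abs_nonneg β) (Real.abs_cos_le_one y)
    have := neg_abs_le (β * Real.cos y)
    linarith
  have hnum : HasDerivAt (fun y => β * Real.sin y) (β * Real.cos x) x :=
    (Real.hasDerivAt_sin x).const_mul β
  have hden : HasDerivAt (fun y => 1 + β * Real.cos y) (β * -Real.sin x) x := by
    simpa using ((Real.hasDerivAt_cos x).const_mul β).const_add 1
  have hq : HasDerivAt (fun y => β * Real.sin y / (1 + β * Real.cos y))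
      ((β * Real.cos x * (1 + β * Real.cos x) - β * Real.sin x * (β * -Real.sin x)) / (1 + β * Real.cos x)^2) x :=
    hnum.div hden (ne_of_gt (hd x))
  have ha := (Real.hasDerivAt_arctan (β * Real.sin x / (1 + β * Real.cos x))).comp x hq
  have h1 := (hasDerivAt_id x).sub (ha.const_mul 2)
  refine h1.congr_deriv ?_
  symm
  have hs := Real.sin_sq_add_cos_sq x
  have hd2 : (0:ℝ) < 1 + β^2 + 2*β*Real.cos x := by
    nlinarith [hd x, hd x]
  set s := Real.sin x
  set c := Real.cos x
  have h3 : (1 + β*c) ≠ 0 := ne_of_gt (hd x)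
  have h4 : 1 + β^2 + β*2*c ≠ 0 := ne_of_gt (by linarith)
  field_simp
  ring_nf
  simp only [show s^2 = 1 - c^2 by linarith]
  ring

/-- FTC input: derivative of `sin (a x) / (1 + e cos x)`. -/
lemma koz_deriv_sin_div (e a x : ℝ) (hd : ∀ y : ℝ, 0 < 1 + e * Real.cos y) :
    HasDerivAt (fun y => Real.sin (a*y) / (1 + e * Real.cos y))
      ((a * Real.cos (a*x) * (1 + e*Real.cos x) + e * Real.sin x * Real.sin (a*x))
        / (1+e*Real.cos x)^2) x := by
  have hnum : HasDerivAt (fun y => Real.sin (a*y)) (a * Real.cos (a*x)) x := by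
    have h := (Real.hasDerivAt_sin (a*x)).comp x ((hasDerivAt_id x).const_mul a)
    exact h.congr_deriv (by simp; ring)
  have hden : HasDerivAt (fun y => 1 + e * Real.cos y) (e * -Real.sin x) x := by
    simpa using ((Real.hasDerivAt_cos x).const_mul e).const_add 1
  have h := hnum.div hden (ne_of_gt (hd x))
  refine h.congr_deriv ?_
  ring

/-- `∫₀^{2π} (a cos(af)(1+e cos f) + e sin f sin(af))/(1+e cos f)² df = 0`. -/
lemma koz_int_deriv_zero (e a : ℝ) (hd : ∀ y : ℝ, 0 < 1 + e * Real.cos y)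
    (ha : Real.sin (a * (2*Real.pi)) = 0) :
    ∫ f in (0:ℝ)..(2*Real.pi),
      (a * Real.cos (a*f) * (1 + e*Real.cos f) + e * Real.sin f * Real.sin (a*f))
        / (1+e*Real.cos f)^2 = 0 := by
  rw [intervalIntegral.integral_eq_sub_of_hasDerivAt
    (fun x _ => koz_deriv_sin_div e a x hd) ?_]
  · simp [ha]
  · apply Continuous.intervalIntegrable
    apply Continuous.div (by fun_prop) (by fun_prop)
    exact fun x => pow_ne_zero 2 (ne_of_gt (hd x))

lemma koz_J0 (e η : ℝ) (he0 : 0 ≤ e) (he1 : e < 1) (hηpos : 0 < η) (hη2 : η^2 = 1 - e^2)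
    (hd : ∀ y : ℝ, 0 < 1 + e * Real.cos y) :
    ∫ f in (0:ℝ)..(2*Real.pi), 1 / (1 + e * Real.cos f) = 2*Real.pi/η := by
  set β := e / (1+η) with hβdef
  have hη1 : (0:ℝ) < 1 + η := by linarith
  have hβ0 : 0 ≤ β := div_nonneg he0 (le_of_lt hη1)
  have hβ1 : |β| < 1 := by
    rw [abs_of_nonneg hβ0, hβdef, div_lt_one hη1]
    linarith
  have hβe : β * (1+η) = e := div_mul_cancel₀ e (ne_of_gt hη1)
  have h2 : (1+β^2) * (1+η) = 2 := by
    have : β^2 * (1+η)^2 = e^2 := by rw [← mul_pow, hβe]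
    have hee : e^2 = 1 - η^2 := by linarith
    have h5 : (1+β^2)*(1+η)*(1+η) = 2*(1+η) := by linear_combination this + hη2
    exact mul_right_cancel₀ (ne_of_gt hη1) h5
  have key : ∀ x ∈ Set.uIcc (0:ℝ) (2*Real.pi), HasDerivAt
      (fun x => (1/η) * (x - 2 * Real.arctan (β * Real.sin x / (1 + β * Real.cos x))))
      (1 / (1 + e * Real.cos x)) x := by
    intro x _
    have h := (arctan_deriv β hβ1 x).const_mul (1/η)
    refine h.congr_deriv ?_
    symm
    have hc := hd x
    have hden2 : (0:ℝ) < 1 + β^2 + 2*β*Real.cos x := by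
      nlinarith [Real.neg_one_le_cos x, Real.cos_le_one x, abs_lt.1 hβ1, sq_nonneg (1-β), sq_nonneg (1+β)]
    have e1 : 1 - β^2 = 2*η/(1+η) := by
      rw [eq_div_iff (ne_of_gt hη1)]
      linear_combination -h2
    have e2 : 1 + β^2 + 2*β*Real.cos x = (2 + 2*e*Real.cos x)/(1+η) := by
      rw [eq_div_iff (ne_of_gt hη1)]
      linear_combination h2 + 2*Real.cos x * hβe
    rw [e1, e2]
    have h4 : (2:ℝ) + 2*e*Real.cos x ≠ 0 := by nlinarith [hc]
    field_simp
  rw [intervalIntegral.integral_eq_sub_of_hasDerivAt key ?_]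
  · simp [Real.sin_two_pi, Real.cos_two_pi]
    field_simp
  · apply Continuous.intervalIntegrable
    apply Continuous.div (by fun_prop) (by fun_prop)
    exact fun x => ne_of_gt (hd x)

/-- `∫ (cos f + e)/(1+e cos f)² = 0`. -/
lemma koz_int_ce (e : ℝ) (hd : ∀ y : ℝ, 0 < 1 + e * Real.cos y) :
    ∫ f in (0:ℝ)..(2*Real.pi), (Real.cos f + e) / (1+e*Real.cos f)^2 = 0 := by
  have h := koz_int_deriv_zero e 1 hd (by simp [Real.sin_two_pi])
  have h2 : ∫ f in (0:ℝ)..(2*Real.pi), (Real.cos f + e) / (1+e*Real.cos f)^2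
      = ∫ f in (0:ℝ)..(2*Real.pi),
        (1 * Real.cos (1*f) * (1 + e*Real.cos f) + e * Real.sin f * Real.sin (1*f))
          / (1+e*Real.cos f)^2 := by
    apply intervalIntegral.integral_congr
    intro x _
    have := Real.sin_sq_add_cos_sq x
    simp only [one_mul]
    rw [div_eq_div_iff (pow_ne_zero 2 (ne_of_gt (hd x))) (pow_ne_zero 2 (ne_of_gt (hd x)))]
    linear_combination (-e)*(1+e*Real.cos x)^2 * this
  rw [h2, h]

/-- `C 0 = 2π/η³`. -/
lemma koz_C0 (e η : ℝ) (he0 : 0 ≤ e) (he1 : e < 1) (hηpos : 0 < η) (hη2 : η^2 = 1 - e^2)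
    (hd : ∀ y : ℝ, 0 < 1 + e * Real.cos y) :
    kozC e 0 = 2*Real.pi/η^3 := by
  have hrw : (fun f => Real.cos (((0:ℕ):ℝ)*f) / (1+e*Real.cos f)^2)
      = fun f => (1/η^2) * (1/(1+e*Real.cos f)) - (e/η^2) * ((Real.cos f + e)/(1+e*Real.cos f)^2) := by
    funext f
    have hu := hd f
    rw [show ((0:ℕ):ℝ) = 0 by norm_num, zero_mul, Real.cos_zero]
    field_simp
    ring_nf
    simp only [hη2]
  rw [kozC, hrw]
  rw [intervalIntegral.integral_sub, intervalIntegral.integral_const_mul, intervalIntegral.integral_const_mul]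
  · rw [koz_J0 e η he0 he1 hηpos hη2 hd, koz_int_ce e hd]
    field_simp
    ring
  · have c1 : Continuous fun f => 1/(1+e*Real.cos f) :=
      Continuous.div (by fun_prop) (by fun_prop) (fun x => ne_of_gt (hd x))
    exact (continuous_const.mul c1).intervalIntegrable _ _
  · have c2 : Continuous fun f => (Real.cos f + e)/(1+e*Real.cos f)^2 :=
      Continuous.div (by fun_prop) (by fun_prop) (fun x => pow_ne_zero 2 (ne_of_gt (hd x)))
    exact (continuous_const.mul c2).intervalIntegrable _ _

/-- Three-term recurrence. -/
lemma koz_rec (e : ℝ) (hd : ∀ y : ℝ, 0 < 1 + e * Real.cos y) (m : ℕ) :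
    ((m:ℝ)+1) * kozC e (m+1) + e/2*(m:ℝ)*kozC e (m+2) + e/2*((m:ℝ)+2)*kozC e m = 0 := by
  have hsin : Real.sin (((m:ℝ)+1) * (2*Real.pi)) = 0 := by
    have : ((m:ℝ)+1)*(2*Real.pi) = ((2*m+2:ℕ):ℝ)*Real.pi := by push_cast; ring
    rw [this, Real.sin_nat_mul_pi]
  have h0 := koz_int_deriv_zero e ((m:ℝ)+1) hd hsin
  have hcongr : (fun f => (((m:ℝ)+1) * Real.cos (((m:ℝ)+1)*f) * (1 + e*Real.cos f)
        + e * Real.sin f * Real.sin (((m:ℝ)+1)*f)) / (1+e*Real.cos f)^2)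
      = fun f => ((m:ℝ)+1) * (Real.cos ((((m+1:ℕ)):ℝ)*f)/(1+e*Real.cos f)^2)
        + (e/2*(m:ℝ)) * (Real.cos (((m+2:ℕ):ℝ)*f)/(1+e*Real.cos f)^2)
        + (e/2*((m:ℝ)+2)) * (Real.cos (((m:ℕ):ℝ)*f)/(1+e*Real.cos f)^2) := by
    funext f
    push_cast
    have e1 : ((m:ℝ)+2)*f = ((m:ℝ)+1)*f + f := by ring
    have e2 : (m:ℝ)*f = ((m:ℝ)+1)*f - f := by ring
    rw [e1, e2, Real.cos_add, Real.cos_sub]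
    ring
  rw [hcongr] at h0
  rw [intervalIntegral.integral_add (((koz_intg hd _ (m+1)).add (koz_intg hd _ (m+2)))) (koz_intg hd _ m),
    intervalIntegral.integral_add (koz_intg hd _ (m+1)) (koz_intg hd _ (m+2)),
    intervalIntegral.integral_const_mul, intervalIntegral.integral_const_mul,
    intervalIntegral.integral_const_mul] at h0
  calc ((m:ℝ)+1) * kozC e (m+1) + e/2*(m:ℝ)*kozC e (m+2) + e/2*((m:ℝ)+2)*kozC e m
      = ((m:ℝ)+1) * (∫ f in (0:ℝ)..(2*Real.pi), Real.cos ((((m+1:ℕ)):ℝ)*f)/(1+e*Real.cos f)^2)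
        + (e/2*(m:ℝ)) * (∫ f in (0:ℝ)..(2*Real.pi), Real.cos (((m+2:ℕ):ℝ)*f)/(1+e*Real.cos f)^2)
        + (e/2*((m:ℝ)+2)) * (∫ f in (0:ℝ)..(2*Real.pi), Real.cos (((m:ℕ):ℝ)*f)/(1+e*Real.cos f)^2) := by
        simp only [kozC]
    _ = 0 := by linarith [h0]

/-- Base case `C 2`. -/
lemma koz_C2 (e η : ℝ) (he0 : 0 < e) (he1 : e < 1) (hηpos : 0 < η) (hη2 : η^2 = 1 - e^2)
    (hd : ∀ y : ℝ, 0 < 1 + e * Real.cos y) :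
    kozC e 2 = 2*Real.pi*((-e)^2*(1+2*η))/(η^3*(1+η)^2) := by
  have hη1 : (0:ℝ) < 1 + η := by linarith
  have hcongr : (fun f => Real.cos (((2:ℕ):ℝ)*f) / (1+e*Real.cos f)^2)
      = fun f => (1/e^2) * (2 - 4 * (1/(1+e*Real.cos f)) + (2-e^2) * (1/(1+e*Real.cos f)^2)) := by
    funext f
    have hu := hd f
    have h2 : ((2:ℕ):ℝ)*f = 2*f := by norm_num
    rw [h2, Real.cos_two_mul]
    have he' : e ≠ 0 := ne_of_gt he0
    have hu' : 1 + Real.cos f * e ≠ 0 := by rw [mul_comm]; exact ne_of_gt hu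
    field_simp
    ring
  have hC0 : (∫ f in (0:ℝ)..(2*Real.pi), 1/(1+e*Real.cos f)^2) = 2*Real.pi/η^3 := by
    rw [← koz_C0 e η (le_of_lt he0) he1 hηpos hη2 hd, kozC]
    apply intervalIntegral.integral_congr
    intro x _
    norm_num
  have hJ0 := koz_J0 e η (le_of_lt he0) he1 hηpos hη2 hd
  have ci : Continuous fun f => 1/(1+e*Real.cos f) :=
    Continuous.div (by fun_prop) (by fun_prop) (fun x => ne_of_gt (hd x))
  have ci2 : Continuous fun f => 1/(1+e*Real.cos f)^2 :=
    Continuous.div (by fun_prop) (by fun_prop) (fun x => pow_ne_zero 2 (ne_of_gt (hd x)))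
  rw [kozC, hcongr, intervalIntegral.integral_const_mul,
    intervalIntegral.integral_add (f := fun f => 2 - 4 * (1/(1+e*Real.cos f))) (g := fun f => (2-e^2) * (1/(1+e*Real.cos f)^2)) (((continuous_const.sub (continuous_const.mul ci)).intervalIntegrable _ _))
      ((continuous_const.mul ci2).intervalIntegrable _ _),
    intervalIntegral.integral_sub (f := fun _ => 2) (g := fun f => 4 * (1/(1+e*Real.cos f))) ((continuous_const.intervalIntegrable _ _))
      ((continuous_const.mul ci).intervalIntegrable _ _),
    intervalIntegral.integral_const_mul, intervalIntegral.integral_const_mul,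
    intervalIntegral.integral_const, hJ0, hC0]
  have hπ := Real.pi_pos
  field_simp
  ring_nf
  simp only [show η^9 = η^7*η^2 by ring, show η^8 = η^6*η^2 by ring, show η^7 = η^5*η^2 by ring, show η^6 = η^4*η^2 by ring, show η^5 = η^3*η^2 by ring, show η^4 = η^2*η^2 by ring, show η^3 = η^1*η^2 by ring, hη2]
  ring

lemma kozB_rec (e η : ℝ) (he0 : 0 < e) (he1 : e < 1) (hηpos : 0 < η) (hη2 : η^2 = 1 - e^2)
    (n : ℕ) :
    ((n:ℝ)+2)*kozB e η (n+2) + e/2*((n:ℝ)+1)*kozB e η (n+3) + e/2*((n:ℝ)+3)*kozB e η (n+1)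
      = 0 := by
  have hη1 : (0:ℝ) < 1 + η := by linarith
  have hH : ((1:ℝ)+η)^(n+1) ≠ 0 := pow_ne_zero _ (ne_of_gt hη1)
  simp only [kozB, show n+2 = (n+1)+1 from rfl, show n+1+1+1 = (n+1)+2 from rfl, pow_succ]
  push_cast
  have hne : (1:ℝ)+η ≠ 0 := ne_of_gt hη1
  have hne2 : η ≠ 0 := ne_of_gt hηpos
  field_simp
  ring_nf
  simp only [show η^16 = η^14*η^2 by ring, show η^15 = η^13*η^2 by ring, show η^14 = η^12*η^2 by ring, show η^13 = η^11*η^2 by ring, show η^12 = η^10*η^2 by ring, show η^11 = η^9*η^2 by ring, show η^10 = η^8*η^2 by ring, show η^9 = η^7*η^2 by ring, show η^8 = η^6*η^2 by ring, show η^7 = η^5*η^2 by ring, show η^6 = η^4*η^2 by ring, show η^5 = η^3*η^2 by ring, show η^4 = η^2*η^2 by ring, show η^3 = η^1*η^2 by ring, hη2]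
  ring

lemma koz_Ck (e η : ℝ) (he0 : 0 < e) (he1 : e < 1) (hηpos : 0 < η) (hη2 : η^2 = 1 - e^2)
    (hd : ∀ y : ℝ, 0 < 1 + e * Real.cos y) (k : ℕ) :
    kozC e k = kozB e η k := by
  have hη1 : (0:ℝ) < 1 + η := by linarith
  have hb0 : kozC e 0 = kozB e η 0 := by
    rw [koz_C0 e η (le_of_lt he0) he1 hηpos hη2 hd, kozB]
    norm_num
  have hb1 : kozC e 1 = kozB e η 1 := by
    have h := koz_rec e hd 0
    norm_num at h
    have : kozC e 1 = -e * kozC e 0 := by linarith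
    rw [this, hb0, kozB, kozB]
    push_cast
    field_simp
    ring
  have key : ∀ m : ℕ, kozC e (m+1) = kozB e η (m+1) ∧ kozC e (m+2) = kozB e η (m+2) := by
    intro m
    induction m with
    | zero =>
      refine ⟨hb1, ?_⟩
      rw [koz_C2 e η he0 he1 hηpos hη2 hd, kozB]
      norm_num
    | succ n ih =>
      refine ⟨ih.2, ?_⟩
      have hrec := koz_rec e hd (n+1)
      push_cast at hrec
      rw [ih.1, ih.2] at hrec
      have hT := kozB_rec e η he0 he1 hηpos hη2 n
      have hne : e/2*((n:ℝ)+1) ≠ 0 := by positivity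
      have : n+1+2 = n+3 := rfl
      rw [this] at hrec ⊢
      refine mul_left_cancel₀ hne ?_
      linarith [hrec, hT]
  cases k with
  | zero => exact hb0
  | succ n => exact (key n).1

lemma koz_sin_zero (e : ℝ) (hd : ∀ y : ℝ, 0 < 1 + e * Real.cos y) (k : ℕ) :
    ∫ f in (0:ℝ)..(2*Real.pi), Real.sin ((k:ℝ)*f) / (1+e*Real.cos f)^2 = 0 := by
  have h := intervalIntegral.integral_comp_sub_left
    (fun x => Real.sin ((k:ℝ)*x)/(1+e*Real.cos x)^2) (2*Real.pi) (a := 0) (b := 2*Real.pi)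
  rw [sub_self, sub_zero] at h
  have h2 : ∀ x, Real.sin ((k:ℝ)*(2*Real.pi - x))/(1+e*Real.cos (2*Real.pi - x))^2
      = -(Real.sin ((k:ℝ)*x)/(1+e*Real.cos x)^2) := by
    intro x
    have hs : Real.sin ((k:ℝ)*(2*Real.pi - x)) = -Real.sin ((k:ℝ)*x) := by
      have hsk : Real.sin ((k:ℝ)*(2*Real.pi)) = 0 := by
        have : (k:ℝ)*(2*Real.pi) = ((2*k:ℕ):ℝ)*Real.pi := by push_cast; ring
        rw [this, Real.sin_nat_mul_pi]
      rw [mul_sub, Real.sin_sub, hsk, Real.cos_nat_mul_two_pi]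
      ring
    have hc : Real.cos (2*Real.pi - x) = Real.cos x := by
      rw [Real.cos_sub, Real.cos_two_pi, Real.sin_two_pi]
      ring
    rw [hs, hc, neg_div]
  have h3 : (∫ x in (0:ℝ)..(2*Real.pi), Real.sin ((k:ℝ)*(2*Real.pi - x))/(1+e*Real.cos (2*Real.pi - x))^2)
      = - ∫ x in (0:ℝ)..(2*Real.pi), Real.sin ((k:ℝ)*x)/(1+e*Real.cos x)^2 := by
    rw [← intervalIntegral.integral_neg]
    exact intervalIntegral.integral_congr fun x _ => h2 x
  rw [h3] at h
  linarith [h]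

/-- Kozai's closed-form average over the true anomaly:
`(1/(2π)) ∫₀^{2π} cos(k·f + ν) · η³/(1 + e·cos f)² df
  = (−e)^k · (1 + k·η)/(1 + η)^k · cos ν`. -/
theorem average_cos_true_anomaly (e : ℝ) (he0 : 0 ≤ e) (he1 : e < 1)
    (η : ℝ) (hη : η = Real.sqrt (1 - e ^ 2)) (k : ℕ) (ν : ℝ) :
    (1 / (2 * Real.pi)) *
      ∫ f in (0:ℝ)..(2 * Real.pi),
        Real.cos ((k : ℝ) * f + ν) * (η ^ 3 / (1 + e * Real.cos f) ^ 2)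
    = (-e) ^ k * (1 + (k : ℝ) * η) / (1 + η) ^ k * Real.cos ν := by
  have hπ := Real.pi_pos
  rcases eq_or_lt_of_le he0 with he | he
  · -- e = 0
    subst hη
    rw [← he]
    norm_num
    cases k with
    | zero =>
      norm_num
      field_simp
    | succ n =>
      norm_num
      have hkey : ∀ x ∈ Set.uIcc (0:ℝ) (2*Real.pi),
          HasDerivAt (fun x => Real.sin (((n:ℝ)+1)*x + ν)/((n:ℝ)+1))
            (Real.cos (((n:ℝ)+1)*x + ν)) x := by
        intro x _
        have h1 : HasDerivAt (fun x : ℝ => ((n:ℝ)+1)*x + ν) ((n:ℝ)+1) x := by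
          simpa using ((hasDerivAt_id x).const_mul ((n:ℝ)+1)).add_const ν
        have h2 := ((Real.hasDerivAt_sin (((n:ℝ)+1)*x + ν)).comp x h1).div_const ((n:ℝ)+1)
        refine h2.congr_deriv ?_
        symm
        field_simp
      rw [intervalIntegral.integral_eq_sub_of_hasDerivAt hkey
        ((Real.continuous_cos.comp (by fun_prop)).intervalIntegrable _ _)]
      have : Real.sin (((n:ℝ)+1)*(2*Real.pi) + ν) = Real.sin ν := by
        rw [Real.sin_add]
        have hs : Real.sin (((n:ℝ)+1)*(2*Real.pi)) = 0 := by
          have : ((n:ℝ)+1)*(2*Real.pi) = ((2*n+2:ℕ):ℝ)*Real.pi := by push_cast; ring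
          rw [this, Real.sin_nat_mul_pi]
        have hc : Real.cos (((n:ℝ)+1)*(2*Real.pi)) = 1 := by
          have : ((n:ℝ)+1)*(2*Real.pi) = ((n+1:ℕ):ℝ)*(2*Real.pi) := by push_cast; ring
          rw [this, Real.cos_nat_mul_two_pi]
        rw [hs, hc]
        ring
      rw [this]
      simp
  · -- 0 < e
    have hd : ∀ y : ℝ, 0 < 1 + e * Real.cos y := koz_pos he0 he1
    have h1e : (0:ℝ) < 1 - e^2 := by nlinarith
    have hηpos : 0 < η := by rw [hη]; positivity
    have hη2 : η^2 = 1 - e^2 := by rw [hη]; exact Real.sq_sqrt (le_of_lt h1e)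
    have hη1 : (0:ℝ) < 1 + η := by linarith
    have hsplit : (fun f => Real.cos ((k:ℝ)*f + ν) * (η^3/(1+e*Real.cos f)^2))
        = fun f => (Real.cos ν * η^3) * (Real.cos ((k:ℝ)*f)/(1+e*Real.cos f)^2)
          - (Real.sin ν * η^3) * (Real.sin ((k:ℝ)*f)/(1+e*Real.cos f)^2) := by
      funext f
      rw [Real.cos_add]
      ring
    have ic : Continuous fun f => Real.cos ((k:ℝ)*f)/(1+e*Real.cos f)^2 :=
      Continuous.div (by fun_prop) (by fun_prop) (fun x => pow_ne_zero 2 (ne_of_gt (hd x)))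
    have is : Continuous fun f => Real.sin ((k:ℝ)*f)/(1+e*Real.cos f)^2 :=
      Continuous.div (by fun_prop) (by fun_prop) (fun x => pow_ne_zero 2 (ne_of_gt (hd x)))
    rw [hsplit, intervalIntegral.integral_sub (f := fun f => (Real.cos ν * η^3) * (Real.cos ((k:ℝ)*f)/(1+e*Real.cos f)^2)) (g := fun f => (Real.sin ν * η^3) * (Real.sin ((k:ℝ)*f)/(1+e*Real.cos f)^2)) ((continuous_const.mul ic).intervalIntegrable _ _)
      ((continuous_const.mul is).intervalIntegrable _ _),
      intervalIntegral.integral_const_mul, intervalIntegral.integral_const_mul,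
      koz_sin_zero e hd k]
    have hck := koz_Ck e η he he1 hηpos hη2 hd k
    rw [kozC, kozB] at hck
    rw [hck]
    have hHk : ((1:ℝ)+η)^k ≠ 0 := pow_ne_zero _ (ne_of_gt hη1)
    field_simp
    ring
end

section
/- Let e be a real number with 0 ≤ e < 1, set η = √(1 − e²), let k be a natural number and ν a real number. Then (1/(2π)) · ∫₀^{2π} sin(k·f + ν) · η³/(1 + e·cos f)² df = (−e)^k · (1 + k·η)/(1 + η)^k · sin ν. In particular, for ν = 0 the average of sin(k·f) over the mean anomaly vanishes. -/
set_option maxHeartbeats 1000000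


open Real intervalIntegral


section Kozai
variable {e η : ℝ}

lemma denom_pos (he0 : 0 ≤ e) (he1 : e < 1) (f : ℝ) : 0 < 1 + e * Real.cos f := by
  nlinarith [Real.neg_one_le_cos f, Real.cos_le_one f]

lemma h1_cont (he0 : 0 ≤ e) (he1 : e < 1) :
    Continuous fun f => η / (1 + e * Real.cos f) :=
  continuous_const.div (by continuity) fun x => (denom_pos he0 he1 x).ne'

lemma h2_cont (he0 : 0 ≤ e) (he1 : e < 1) :
    Continuous fun f => η ^ 3 / (1 + e * Real.cos f) ^ 2 :=
  continuous_const.div (by continuity) fun x => pow_ne_zero 2 (denom_pos he0 he1 x).ne'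

-- integral of cos(m f) over a period, m ≥ 1
lemma K_zero (m : ℕ) : ∫ f in (0:ℝ)..(2*π), Real.cos (((m:ℝ)+1) * f) = 0 := by
  have hm : ((m:ℝ)+1) ≠ 0 := by positivity
  rw [intervalIntegral.integral_comp_mul_left (fun x => Real.cos x) hm]
  rw [integral_cos]
  have h1 : ((m:ℝ)+1) * (2*π) = ((2*m+2 : ℕ):ℝ) * π := by push_cast; ring
  rw [h1, Real.sin_nat_mul_pi]; simp


theorem Efun_deriv (he0 : 0 ≤ e) (he1 : e < 1) (hη2 : η^2 = 1 - e^2)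
    (hηpos : 0 < η) (f : ℝ) :
    HasDerivAt (fun x => x - 2 * Real.arctan (e * Real.sin x / (1 + η + e * Real.cos x)))
      (η / (1 + e * Real.cos f)) f := by
  have hden : (0:ℝ) < 1 + e * Real.cos f := by
    nlinarith [Real.neg_one_le_cos f, Real.cos_le_one f]
  have hD : (0:ℝ) < 1 + η + e * Real.cos f := by nlinarith
  set s := Real.sin f with hs_def
  set c := Real.cos f with hc_def
  have hs : s^2 + c^2 = 1 := Real.sin_sq_add_cos_sq f
  have h1 : HasDerivAt (fun x => e * Real.sin x) (e * c) f :=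
    (Real.hasDerivAt_sin f).const_mul e
  have h2 : HasDerivAt (fun x => 1 + η + e * Real.cos x) (e * -s) f := by
    simpa using (((Real.hasDerivAt_cos f).const_mul e).const_add (1 + η))
  have h3 := h1.div h2 hD.ne'
  have h4 := (h3.arctan).const_mul 2
  have h5 := (hasDerivAt_id f).sub h4
  convert h5 using 1
  case e'_4 => rfl
  case e'_5 => rfl
  case e'_8 => rfl
  set D := 1 + η + e * c with hD_def
  have e1 : (1 + (e*s/D)^2) = (2*(1+η)*(1+e*c))/D^2 := by
    field_simp
    linear_combination e^2 * hs + hη2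
  have h1η : (0:ℝ) < 1 + η := by linarith
  simp only [Pi.div_apply, ← hs_def, ← hc_def, ← hD_def]
  rw [e1]
  have hNe : (e*c*D - e*s*(e*(-s))) = e*c*(1+η) + e^2 := by
    rw [hD_def]; linear_combination e^2 * hs
  rw [hNe]
  have hD2 : D^2 ≠ 0 := by positivity
  have e2 : (1 / (2*(1+η)*(1+e*c)/D^2) * ((e*c*(1+η)+e^2)/D^2))
      = (e*c*(1+η)+e^2)/(2*(1+η)*(1+e*c)) := by
    have hA : (2*(1+η)*(1+e*c)) ≠ 0 := by positivity
    field_simp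
  rw [e2]
  field_simp
  linear_combination hη2


theorem Mfun_deriv (he0 : 0 ≤ e) (he1 : e < 1) (hη2 : η^2 = 1 - e^2)
    (hηpos : 0 < η) (f : ℝ) :
    HasDerivAt (fun x => (x - 2 * Real.arctan (e * Real.sin x / (1 + η + e * Real.cos x)))
        - e * η * Real.sin x / (1 + e * Real.cos x))
      (η^3 / (1 + e * Real.cos f)^2) f := by
  have hden := denom_pos (e := e) he0 he1
  have h1 : HasDerivAt (fun x => e * η * Real.sin x) (e * η * Real.cos f) f :=
    (Real.hasDerivAt_sin f).const_mul (e * η)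
  have h2 : HasDerivAt (fun x => 1 + e * Real.cos x) (e * -Real.sin f) f := by
    simpa using (((Real.hasDerivAt_cos f).const_mul e).const_add 1)
  have h3 := h1.div h2 (hden f).ne'
  have h4 := (Efun_deriv he0 he1 hη2 hηpos f).sub h3
  convert h4 using 1
  case e'_4 => rfl
  case e'_5 => rfl
  case e'_8 => rfl
  have hs := Real.sin_sq_add_cos_sq f
  have hne := (hden f).ne'
  rw [show η^3 = η * (1 + e * Real.cos f) - (e * η * Real.cos f * (1 + e * Real.cos f)
      - e * η * Real.sin f * (e * -Real.sin f)) by linear_combination η * hη2 + η * e^2 * hs,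
    sub_div, pow_two, mul_div_mul_right _ _ hne]

theorem int_E (he0 : 0 ≤ e) (he1 : e < 1) (hη2 : η^2 = 1 - e^2) (hηpos : 0 < η) :
    ∫ f in (0:ℝ)..(2*π), η / (1 + e * Real.cos f) = 2*π := by
  have h := intervalIntegral.integral_eq_sub_of_hasDerivAt
    (f := fun x => x - 2 * Real.arctan (e * Real.sin x / (1 + η + e * Real.cos x)))
    (fun x _ => Efun_deriv he0 he1 hη2 hηpos x)
    ((h1_cont he0 he1).intervalIntegrable 0 (2*π))
  rw [h]
  simp [Real.sin_two_pi]

theorem int_M (he0 : 0 ≤ e) (he1 : e < 1) (hη2 : η^2 = 1 - e^2) (hηpos : 0 < η) :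
    ∫ f in (0:ℝ)..(2*π), η^3 / (1 + e * Real.cos f)^2 = 2*π := by
  have h := intervalIntegral.integral_eq_sub_of_hasDerivAt
    (f := fun x => (x - 2 * Real.arctan (e * Real.sin x / (1 + η + e * Real.cos x)))
        - e * η * Real.sin x / (1 + e * Real.cos x))
    (fun x _ => Mfun_deriv he0 he1 hη2 hηpos x)
    ((h2_cont he0 he1).intervalIntegrable 0 (2*π))
  rw [h]
  simp [Real.sin_two_pi]


theorem sin_int_zero (he0 : 0 ≤ e) (he1 : e < 1) (k : ℕ) :
    ∫ f in (0:ℝ)..(2*π), Real.sin ((k:ℝ)*f) * (η^3 / (1 + e * Real.cos f)^2) = 0 := by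
  set F : ℝ → ℝ := fun x => Real.sin ((k:ℝ)*x) * (η^3 / (1 + e * Real.cos x)^2) with hF
  have hper : Function.Periodic F (2*π) := by
    intro x
    simp only [hF]
    rw [mul_add, Real.sin_add_nat_mul_two_pi, Real.cos_add_two_pi]
  have h1 : ∫ x in (0:ℝ)..(2*π), F x = ∫ x in (-π)..π, F x := by
    have := hper.intervalIntegral_add_eq 0 (-π)
    simp only [zero_add] at this
    rw [this, show -π + 2*π = π by ring]
  have hodd : ∀ x, F (-x) = -F x := by
    intro x
    simp only [hF, mul_neg, Real.sin_neg, Real.cos_neg, neg_mul]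
  have h2 : ∫ x in (-π)..π, F (-x) = ∫ x in (-π)..π, F x := by
    simpa using intervalIntegral.integral_comp_neg (a := -π) (b := π) F
  have h3 : ∫ x in (-π)..π, F (-x) = -∫ x in (-π)..π, F x := by
    simp only [hodd]
    exact intervalIntegral.integral_neg
  have : ∫ x in (-π)..π, F x = 0 := by linarith [h2.symm.trans h3]
  rw [h1, this]

-- interval integrability helpers
lemma intg1 (he0 : 0 ≤ e) (he1 : e < 1) (g : ℝ → ℝ) (hg : Continuous g) :
    IntervalIntegrable (fun f => g f * (η / (1 + e * Real.cos f))) MeasureTheory.volume 0 (2*π) :=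
  (hg.mul (h1_cont he0 he1)).intervalIntegrable 0 (2*π)

lemma intg2 (he0 : 0 ≤ e) (he1 : e < 1) (g : ℝ → ℝ) (hg : Continuous g) :
    IntervalIntegrable (fun f => g f * (η^3 / (1 + e * Real.cos f)^2)) MeasureTheory.volume 0 (2*π) :=
  (hg.mul (h2_cont he0 he1)).intervalIntegrable 0 (2*π)


lemma recJ (he0 : 0 ≤ e) (he1 : e < 1) (hη2 : η^2 = 1 - e^2) (hηpos : 0 < η) (k : ℕ) :
    e * ∫ f in (0:ℝ)..(2*π), Real.cos (((k:ℝ)+2)*f) * (η / (1 + e * Real.cos f))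
    = 2*η*(∫ f in (0:ℝ)..(2*π), Real.cos (((k:ℝ)+1)*f))
      - 2*(∫ f in (0:ℝ)..(2*π), Real.cos (((k:ℝ)+1)*f) * (η / (1 + e * Real.cos f)))
      - e*(∫ f in (0:ℝ)..(2*π), Real.cos ((k:ℝ)*f) * (η / (1 + e * Real.cos f))) := by
  have hden := denom_pos (e := e) he0 he1
  rw [← intervalIntegral.integral_const_mul]
  have hpt : ∀ f : ℝ, e * (Real.cos (((k:ℝ)+2)*f) * (η / (1 + e * Real.cos f)))
      = 2*η*Real.cos (((k:ℝ)+1)*f)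
        - 2*(Real.cos (((k:ℝ)+1)*f) * (η / (1 + e * Real.cos f)))
        - e*(Real.cos ((k:ℝ)*f) * (η / (1 + e * Real.cos f))) := by
    intro f
    have h2 : ((k:ℝ)+2)*f = ((k:ℝ)+1)*f + f := by ring
    have h0 : (k:ℝ)*f = ((k:ℝ)+1)*f - f := by ring
    rw [h2, h0, Real.cos_add, Real.cos_sub]
    have hne := (hden f).ne'
    field_simp
    ring
  rw [intervalIntegral.integral_congr (g := fun f => 2*η*Real.cos (((k:ℝ)+1)*f)
        - 2*(Real.cos (((k:ℝ)+1)*f) * (η / (1 + e * Real.cos f)))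
        - e*(Real.cos ((k:ℝ)*f) * (η / (1 + e * Real.cos f)))) (fun f _ => hpt f)]
  have i1 : IntervalIntegrable (fun f => 2*η*Real.cos (((k:ℝ)+1)*f)) MeasureTheory.volume 0 (2*π) :=
    (continuous_const.mul ((Real.continuous_cos.comp (continuous_const.mul continuous_id))) : Continuous fun f => 2*η*Real.cos (((k:ℝ)+1)*f)).intervalIntegrable 0 (2*π)
  have i2 : IntervalIntegrable (fun f => 2*(Real.cos (((k:ℝ)+1)*f) * (η / (1 + e * Real.cos f))))
      MeasureTheory.volume 0 (2*π) :=
    ((intg1 he0 he1 _ ((Real.continuous_cos.comp (continuous_const.mul continuous_id)))).const_mul 2)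
  have i3 : IntervalIntegrable (fun f => e*(Real.cos ((k:ℝ)*f) * (η / (1 + e * Real.cos f))))
      MeasureTheory.volume 0 (2*π) :=
    ((intg1 he0 he1 _ ((Real.continuous_cos.comp (continuous_const.mul continuous_id)))).const_mul e)
  rw [intervalIntegral.integral_sub (i1.sub i2) i3, intervalIntegral.integral_sub i1 i2,
    intervalIntegral.integral_const_mul, intervalIntegral.integral_const_mul,
    intervalIntegral.integral_const_mul]

lemma recI (he0 : 0 ≤ e) (he1 : e < 1) (hη2 : η^2 = 1 - e^2) (hηpos : 0 < η) (k : ℕ) :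
    e * ∫ f in (0:ℝ)..(2*π), Real.cos (((k:ℝ)+2)*f) * (η^3 / (1 + e * Real.cos f)^2)
    = 2*η^2*(∫ f in (0:ℝ)..(2*π), Real.cos (((k:ℝ)+1)*f) * (η / (1 + e * Real.cos f)))
      - 2*(∫ f in (0:ℝ)..(2*π), Real.cos (((k:ℝ)+1)*f) * (η^3 / (1 + e * Real.cos f)^2))
      - e*(∫ f in (0:ℝ)..(2*π), Real.cos ((k:ℝ)*f) * (η^3 / (1 + e * Real.cos f)^2)) := by
  have hden := denom_pos (e := e) he0 he1
  rw [← intervalIntegral.integral_const_mul]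
  have hpt : ∀ f : ℝ, e * (Real.cos (((k:ℝ)+2)*f) * (η^3 / (1 + e * Real.cos f)^2))
      = 2*η^2*(Real.cos (((k:ℝ)+1)*f) * (η / (1 + e * Real.cos f)))
        - 2*(Real.cos (((k:ℝ)+1)*f) * (η^3 / (1 + e * Real.cos f)^2))
        - e*(Real.cos ((k:ℝ)*f) * (η^3 / (1 + e * Real.cos f)^2)) := by
    intro f
    have h2 : ((k:ℝ)+2)*f = ((k:ℝ)+1)*f + f := by ring
    have h0 : (k:ℝ)*f = ((k:ℝ)+1)*f - f := by ring
    rw [h2, h0, Real.cos_add, Real.cos_sub]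
    have hne := (hden f).ne'
    field_simp
    ring
  rw [intervalIntegral.integral_congr (g := fun f => 2*η^2*(Real.cos (((k:ℝ)+1)*f) * (η / (1 + e * Real.cos f)))
        - 2*(Real.cos (((k:ℝ)+1)*f) * (η^3 / (1 + e * Real.cos f)^2))
        - e*(Real.cos ((k:ℝ)*f) * (η^3 / (1 + e * Real.cos f)^2))) (fun f _ => hpt f)]
  have i1 : IntervalIntegrable (fun f => 2*η^2*(Real.cos (((k:ℝ)+1)*f) * (η / (1 + e * Real.cos f))))
      MeasureTheory.volume 0 (2*π) :=
    ((intg1 he0 he1 _ ((Real.continuous_cos.comp (continuous_const.mul continuous_id)))).const_mul (2*η^2))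
  have i2 : IntervalIntegrable (fun f => 2*(Real.cos (((k:ℝ)+1)*f) * (η^3 / (1 + e * Real.cos f)^2)))
      MeasureTheory.volume 0 (2*π) :=
    ((intg2 he0 he1 _ ((Real.continuous_cos.comp (continuous_const.mul continuous_id)))).const_mul 2)
  have i3 : IntervalIntegrable (fun f => e*(Real.cos ((k:ℝ)*f) * (η^3 / (1 + e * Real.cos f)^2)))
      MeasureTheory.volume 0 (2*π) :=
    ((intg2 he0 he1 _ ((Real.continuous_cos.comp (continuous_const.mul continuous_id)))).const_mul e)
  rw [intervalIntegral.integral_sub (i1.sub i2) i3, intervalIntegral.integral_sub i1 i2,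
    intervalIntegral.integral_const_mul, intervalIntegral.integral_const_mul,
    intervalIntegral.integral_const_mul]


lemma closed_pair (he0 : 0 ≤ e) (he1 : e < 1) (hη2 : η^2 = 1 - e^2) (hηpos : 0 < η)
    (he : e ≠ 0) (k : ℕ) :
    ((∫ f in (0:ℝ)..(2*π), Real.cos ((k:ℝ)*f) * (η / (1 + e * Real.cos f)))
        = 2*π*(-e/(1+η))^k)
    ∧ ((∫ f in (0:ℝ)..(2*π), Real.cos ((k:ℝ)*f) * (η^3 / (1 + e * Real.cos f)^2))
        = 2*π*((-e/(1+η))^k*(1+(k:ℝ)*η))) := by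
  have h1η : (0:ℝ) < 1 + η := by linarith
  have hβ : e*(-e/(1+η))^2 + 2*(-e/(1+η)) + e = 0 := by
    field_simp
    linear_combination e * hη2
  have hβ1 : (-e/(1+η))*(1+η) = -e := by field_simp
  have hden := denom_pos (e := e) he0 he1
  -- strengthen to pair of consecutive values
  suffices H : ∀ k : ℕ,
      (((∫ f in (0:ℝ)..(2*π), Real.cos ((k:ℝ)*f) * (η / (1 + e * Real.cos f)))
          = 2*π*(-e/(1+η))^k)
      ∧ ((∫ f in (0:ℝ)..(2*π), Real.cos ((k:ℝ)*f) * (η^3 / (1 + e * Real.cos f)^2))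
          = 2*π*((-e/(1+η))^k*(1+(k:ℝ)*η))))
      ∧ (((∫ f in (0:ℝ)..(2*π), Real.cos (((k:ℝ)+1)*f) * (η / (1 + e * Real.cos f)))
          = 2*π*(-e/(1+η))^(k+1))
      ∧ ((∫ f in (0:ℝ)..(2*π), Real.cos (((k:ℝ)+1)*f) * (η^3 / (1 + e * Real.cos f)^2))
          = 2*π*((-e/(1+η))^(k+1)*(1+((k:ℝ)+1)*η)))) by
    exact (H k).1
  intro k
  induction k with
  | zero =>
    constructor
    · constructor
      · simp only [Nat.cast_zero, zero_mul, Real.cos_zero, one_mul, pow_zero, mul_one]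
        exact int_E he0 he1 hη2 hηpos
      · simp only [Nat.cast_zero, zero_mul, Real.cos_zero, one_mul, pow_zero, mul_one]
        rw [int_M he0 he1 hη2 hηpos]; ring
    · constructor
      · -- J 1
        have hpt : ∀ f : ℝ, Real.cos (((0:ℝ)+1)*f) * (η / (1 + e * Real.cos f))
            = η/e - (1/e)*(η / (1 + e * Real.cos f)) := by
          intro f
          have hne := (hden f).ne'
          rw [show ((0:ℝ)+1)*f = f by ring]
          field_simp
          rw [mul_comm (cos f) e]; field_simp; ring
        push_cast
        rw [intervalIntegral.integral_congr (fun f _ => hpt f)]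
        rw [intervalIntegral.integral_sub
          ((continuous_const : Continuous fun _ : ℝ => η/e).intervalIntegrable 0 (2*π))
          ((h1_cont he0 he1).intervalIntegrable 0 (2*π) |>.const_mul (1/e)),
          intervalIntegral.integral_const_mul, int_E he0 he1 hη2 hηpos,
          intervalIntegral.integral_const]
        simp only [smul_eq_mul]
        field_simp
        linear_combination (2*π) * hη2
      · -- I 1
        have hpt : ∀ f : ℝ, Real.cos (((0:ℝ)+1)*f) * (η^3 / (1 + e * Real.cos f)^2)
            = (η^2/e)*(η / (1 + e * Real.cos f)) - (1/e)*(η^3 / (1 + e * Real.cos f)^2) := by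
          intro f
          have hne := (hden f).ne'
          rw [show ((0:ℝ)+1)*f = f by ring]
          field_simp
          ring
        push_cast
        rw [intervalIntegral.integral_congr (fun f _ => hpt f)]
        rw [intervalIntegral.integral_sub
          ((h1_cont he0 he1).intervalIntegrable 0 (2*π) |>.const_mul (η^2/e))
          ((h2_cont he0 he1).intervalIntegrable 0 (2*π) |>.const_mul (1/e)),
          intervalIntegral.integral_const_mul, intervalIntegral.integral_const_mul,
          int_E he0 he1 hη2 hηpos, int_M he0 he1 hη2 hηpos]
        field_simp
        linear_combination (1+η) * hη2
  | succ n ih =>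
    obtain ⟨⟨hJ0, hI0⟩, hJ1, hI1⟩ := ih
    push_cast
    refine ⟨⟨hJ1, hI1⟩, ?_, ?_⟩
    · refine mul_left_cancel₀ he ?_
      rw [show ((n:ℝ)+1+1) = (n:ℝ)+2 by ring]
      rw [recJ he0 he1 hη2 hηpos n, K_zero n, hJ1, hJ0]
      linear_combination (-(2*π*(-e/(1+η))^n)) * hβ
    · refine mul_left_cancel₀ he ?_
      rw [show ((n:ℝ)+1+1) = (n:ℝ)+2 by ring]
      rw [recI he0 he1 hη2 hηpos n, hJ1, hI1, hI0]
      linear_combination (-(2*π*(-e/(1+η))^n*(1+((n:ℝ)+2)*η))) * hβ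
        + (4*π*η*(-e/(1+η))^n) * hβ1

lemma cosI (he0 : 0 ≤ e) (he1 : e < 1) (hη2 : η^2 = 1 - e^2) (hηpos : 0 < η) (k : ℕ) :
    (∫ f in (0:ℝ)..(2*π), Real.cos ((k:ℝ)*f) * (η^3 / (1 + e * Real.cos f)^2))
      = 2*π*((-e)^k*(1+(k:ℝ)*η)/(1+η)^k) := by
  have h1η : (0:ℝ) < 1 + η := by linarith
  by_cases he : e = 0
  · subst he
    have hη1 : η = 1 := by nlinarith
    subst hη1
    simp only [zero_mul, mul_zero, add_zero, one_pow]
    norm_num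
    cases k with
    | zero => simp
    | succ m =>
      push_cast
      rw [K_zero m]
      simp
  · rw [(closed_pair he0 he1 hη2 hηpos he k).2, div_pow]
    ring

end Kozai


/-- Kozai's closed-form average over the true anomaly:
`(1/(2π)) ∫₀^{2π} sin(k·f + ν) · η³/(1 + e·cos f)² df
  = (−e)^k · (1 + k·η)/(1 + η)^k · sin ν`;
in particular, for `ν = 0` the average of `sin (k·f)` over the mean anomaly vanishes. -/
theorem average_sin_true_anomaly (e : ℝ) (he0 : 0 ≤ e) (he1 : e < 1)
    (η : ℝ) (hη : η = Real.sqrt (1 - e ^ 2)) (k : ℕ) (ν : ℝ) :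
    ((1 / (2 * Real.pi)) *
      ∫ f in (0:ℝ)..(2 * Real.pi),
        Real.sin ((k : ℝ) * f + ν) * (η ^ 3 / (1 + e * Real.cos f) ^ 2)
    = (-e) ^ k * (1 + (k : ℝ) * η) / (1 + η) ^ k * Real.sin ν) ∧
    ((1 / (2 * Real.pi)) *
      ∫ f in (0:ℝ)..(2 * Real.pi),
        Real.sin ((k : ℝ) * f) * (η ^ 3 / (1 + e * Real.cos f) ^ 2) = 0) := by
  have h2 : (0:ℝ) < 1 - e^2 := by nlinarith
  have hη2 : η^2 = 1 - e^2 := by rw [hη]; exact Real.sq_sqrt h2.le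
  have hηpos : 0 < η := by rw [hη]; exact Real.sqrt_pos.2 h2
  have hπ : (2*π) ≠ 0 := by positivity
  constructor
  · have hdec : ∀ f : ℝ, Real.sin ((k:ℝ)*f+ν) * (η^3/(1+e*Real.cos f)^2)
        = Real.sin ν * (Real.cos ((k:ℝ)*f) * (η^3/(1+e*Real.cos f)^2))
          + Real.cos ν * (Real.sin ((k:ℝ)*f) * (η^3/(1+e*Real.cos f)^2)) := by
      intro f; rw [Real.sin_add]; ring
    rw [intervalIntegral.integral_congr (fun f _ => hdec f)]
    rw [intervalIntegral.integral_add
      ((intg2 he0 he1 (fun f => Real.cos ((k:ℝ)*f)) (Real.continuous_cos.comp (continuous_const.mul continuous_id))).const_mul _)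
      ((intg2 he0 he1 (fun f => Real.sin ((k:ℝ)*f)) (Real.continuous_sin.comp (continuous_const.mul continuous_id))).const_mul _),
      intervalIntegral.integral_const_mul, intervalIntegral.integral_const_mul,
      sin_int_zero he0 he1 k, cosI he0 he1 hη2 hηpos k]
    have h1k : ((1+η):ℝ)^k ≠ 0 := by positivity
    field_simp
    ring
  · rw [sin_int_zero he0 he1 k]; ring
end

section
/- Let e be real with 0 ≤ e < 1 and set η = √(1 − e²). Let u : ℝ → ℝ satisfy u(M) − e·sin(u(M)) = M for all M, and let f : ℝ → ℝ satisfy, for all M, cos(f(M)) = (cos(u(M)) − e)/(1 − e·cos(u(M))) and sin(f(M)) = η·sin(u(M))/(1 − e·cos(u(M))). If u and f are differentiable at a point M₀, then f'(M₀) = (1 + e·cos(f(M₀)))²/η³. -/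
/-- Derivative of the true anomaly with respect to the mean anomaly: with
`u(M) − e·sin (u M) = M` (Kepler's equation) and the standard relations between the
true anomaly `f` and the eccentric anomaly `u`, if `u` and `f` are differentiable at
`M₀` then `f'(M₀) = (1 + e·cos (f M₀))²/η³`. -/
theorem true_anomaly_deriv_wrt_mean_anomaly (e : ℝ) (he0 : 0 ≤ e) (he1 : e < 1)
    (η : ℝ) (hη : η = Real.sqrt (1 - e ^ 2)) (u f : ℝ → ℝ)
    (hu : ∀ M : ℝ, u M - e * Real.sin (u M) = M)
    (hcos : ∀ M : ℝ, Real.cos (f M) = (Real.cos (u M) - e) / (1 - e * Real.cos (u M)))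
    (hsin : ∀ M : ℝ, Real.sin (f M) = η * Real.sin (u M) / (1 - e * Real.cos (u M)))
    (M₀ : ℝ) (hdu : DifferentiableAt ℝ u M₀) (hdf : DifferentiableAt ℝ f M₀) :
    deriv f M₀ = (1 + e * Real.cos (f M₀)) ^ 2 / η ^ 3 := by
  set u' := deriv u M₀ with hu'def
  set f' := deriv f M₀ with hf'def
  set c := Real.cos (u M₀) with hc
  set s := Real.sin (u M₀) with hs
  have hcs : s ^ 2 + c ^ 2 = 1 := Real.sin_sq_add_cos_sq (u M₀)
  have he2 : (0:ℝ) < 1 - e ^ 2 := by nlinarith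
  have hηpos : 0 < η := hη ▸ Real.sqrt_pos.mpr he2
  have hη2 : η ^ 2 = 1 - e ^ 2 := by rw [hη, Real.sq_sqrt he2.le]
  have hDpos : 0 < 1 - e * c := by
    have h1 : e * c ≤ e * 1 := by
      rcases eq_or_lt_of_le he0 with h | h
      · simp [← h]
      · exact mul_le_mul_of_nonneg_left (Real.cos_le_one _) he0
    linarith
  have hDne : (1 - e * c) ≠ 0 := ne_of_gt hDpos
  have hU : HasDerivAt u u' M₀ := hdu.hasDerivAt
  have hF : HasDerivAt f f' M₀ := hdf.hasDerivAt
  -- derivative of sin ∘ u and cos ∘ u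
  have hsu : HasDerivAt (fun M => Real.sin (u M)) (c * u') M₀ :=
    (Real.hasDerivAt_sin (u M₀)).comp M₀ hU
  have hcu : HasDerivAt (fun M => Real.cos (u M)) (-s * u') M₀ :=
    (Real.hasDerivAt_cos (u M₀)).comp M₀ hU
  -- Kepler's equation differentiated: u' * (1 - e*c) = 1
  have hkep : u' - e * (c * u') = 1 := by
    have h1 : HasDerivAt (fun M => u M - e * Real.sin (u M)) (u' - e * (c * u')) M₀ :=
      hU.sub (hsu.const_mul e)
    have h2 : HasDerivAt (fun M : ℝ => u M - e * Real.sin (u M)) 1 M₀ := by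
      have : (fun M : ℝ => u M - e * Real.sin (u M)) = id := funext hu
      rw [this]; exact hasDerivAt_id M₀
    exact h1.unique h2
  -- derivative of denominator
  have hden : HasDerivAt (fun M => 1 - e * Real.cos (u M)) (0 - e * (-s * u')) M₀ :=
    (hasDerivAt_const M₀ (1:ℝ)).sub (hcu.const_mul e)
  -- sin f equation
  have hsf : HasDerivAt (fun M => Real.sin (f M)) (Real.cos (f M₀) * f') M₀ :=
    (Real.hasDerivAt_sin (f M₀)).comp M₀ hF
  have hsf2 : HasDerivAt (fun M => Real.sin (f M))
      ((η * (c * u') * (1 - e * c) - η * s * (0 - e * (-s * u'))) / (1 - e * c) ^ 2) M₀ := by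
    have h1 : HasDerivAt (fun M => η * Real.sin (u M) / (1 - e * Real.cos (u M))) _ M₀ :=
      (hsu.const_mul η).div hden hDne
    have h2 : (fun M => η * Real.sin (u M) / (1 - e * Real.cos (u M)))
        = fun M => Real.sin (f M) := funext fun M => (hsin M).symm
    rw [h2] at h1; exact h1
  have E1 : Real.cos (f M₀) * f'
      = (η * (c * u') * (1 - e * c) - η * s * (0 - e * (-s * u'))) / (1 - e * c) ^ 2 :=
    hsf.unique hsf2
  -- cos f equation
  have hcf : HasDerivAt (fun M => Real.cos (f M)) (-Real.sin (f M₀) * f') M₀ :=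
    (Real.hasDerivAt_cos (f M₀)).comp M₀ hF
  have hcf2 : HasDerivAt (fun M => Real.cos (f M))
      ((-s * u' * (1 - e * c) - (c - e) * (0 - e * (-s * u'))) / (1 - e * c) ^ 2) M₀ := by
    have h1 : HasDerivAt (fun M => (Real.cos (u M) - e) / (1 - e * Real.cos (u M))) _ M₀ :=
      (hcu.sub (hasDerivAt_const M₀ e)).div hden hDne
    have h2 : (fun M => (Real.cos (u M) - e) / (1 - e * Real.cos (u M)))
        = fun M => Real.cos (f M) := funext fun M => (hcos M).symm
    simp only [sub_zero] at h1
    rw [h2] at h1; exact h1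
  have E2 : -Real.sin (f M₀) * f'
      = (-s * u' * (1 - e * c) - (c - e) * (0 - e * (-s * u'))) / (1 - e * c) ^ 2 :=
    hcf.unique hcf2
  -- values of sin f, cos f at M₀
  have hcfv : Real.cos (f M₀) = (c - e) / (1 - e * c) := hcos M₀
  have hsfv : Real.sin (f M₀) = η * s / (1 - e * c) := hsin M₀
  -- combine: f' = sin f * (sin f * f') + cos f * (cos f * f')
  have hpyth : Real.sin (f M₀) ^ 2 + Real.cos (f M₀) ^ 2 = 1 :=
    Real.sin_sq_add_cos_sq (f M₀)
  have hf'val : f' = η / (1 - e * c) ^ 2 := by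
    have key : f' = Real.sin (f M₀) * (Real.sin (f M₀) * f')
        + Real.cos (f M₀) * (Real.cos (f M₀) * f') := by linear_combination (-f') * hpyth
    have hsin_eq : Real.sin (f M₀) * f'
        = -(-Real.sin (f M₀) * f') := by ring
    rw [key, hsin_eq, E2, E1, hcfv, hsfv]
    field_simp
    linear_combination (u' * (1 - e * c)) * hcs + (1 - e * c) * hkep
  have hone : 1 + e * Real.cos (f M₀) = η ^ 2 / (1 - e * c) := by
    rw [hcfv, hη2]; field_simp; ring
  rw [hf'val, hone]
  rw [div_pow, div_div]
  rw [div_eq_div_iff (by positivity) (by positivity)]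
  ring
end

section
/- Let a, e, u, ω, Ω, i, f_P be real numbers with 0 ≤ e ≤ 1, and set η = √(1 − e²), X = a·(cos u − e), Y = a·η·sin u. Then (X·cos ω − Y·sin ω)·cos(f_P − Ω) + cos i·(X·sin ω + Y·cos ω)·sin(f_P − Ω) = T₀ + T₁ + T₂, where T₀ = (a(η+1)/4)·(cos i + 1)·cos(−u + f_P − ω − Ω) − (a(η+1)/4)·(cos i − 1)·cos(u + f_P + ω − Ω), T₁ = −(a e/2)·(cos i + 1)·cos(−ω + f_P − Ω) + (a e/2)·(cos i − 1)·cos(ω + f_P − Ω), and T₂ = (a e²/(4(1+η)))·(cos i + 1)·cos(u + f_P − ω − Ω) − (a e²/(4(1+η)))·(cos i − 1)·cos(−u + f_P + ω − Ω). -/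
/-- The identity `r·cos α = T₀ + T₁ + T₂` expressing the projection of the particle's
position on the direction of the planet as a finite trigonometric sum (key step in the
proof of the D'Alembert rules, Lemma 1). -/
theorem r_cos_alpha_trig_identity (a e u ω Ω i fP : ℝ)
    (he0 : 0 ≤ e) (he1 : e ≤ 1)
    (η X Y T₀ T₁ T₂ : ℝ)
    (hη : η = Real.sqrt (1 - e ^ 2))
    (hX : X = a * (Real.cos u - e))
    (hY : Y = a * η * Real.sin u)
    (hT0 : T₀ = (a * (η + 1) / 4) * (Real.cos i + 1) * Real.cos (-u + fP - ω - Ω)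
              - (a * (η + 1) / 4) * (Real.cos i - 1) * Real.cos (u + fP + ω - Ω))
    (hT1 : T₁ = -(a * e / 2) * (Real.cos i + 1) * Real.cos (-ω + fP - Ω)
              + (a * e / 2) * (Real.cos i - 1) * Real.cos (ω + fP - Ω))
    (hT2 : T₂ = (a * e ^ 2 / (4 * (1 + η))) * (Real.cos i + 1) * Real.cos (u + fP - ω - Ω)
              - (a * e ^ 2 / (4 * (1 + η))) * (Real.cos i - 1) * Real.cos (-u + fP + ω - Ω)) :
    (X * Real.cos ω - Y * Real.sin ω) * Real.cos (fP - Ω)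
      + Real.cos i * (X * Real.sin ω + Y * Real.cos ω) * Real.sin (fP - Ω)
    = T₀ + T₁ + T₂ := by
  have hη0 : 0 ≤ η := hη ▸ Real.sqrt_nonneg _
  have hη2 : η ^ 2 = 1 - e ^ 2 := by
    rw [hη, sq, Real.mul_self_sqrt (by nlinarith)]
  have he2 : e ^ 2 = (1 - η) * (1 + η) := by nlinarith
  have hne : (1 : ℝ) + η ≠ 0 := by positivity
  subst hX hY hT0 hT1 hT2
  rw [he2]
  have hdiv : ∀ c : ℝ, a * ((1 - η) * (1 + η)) / (4 * (1 + η)) * c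
      = a * (1 - η) / 4 * c := by
    intro c
    field_simp
  simp only [hdiv]
  simp only [show ∀ x y : ℝ, -x + y = y - x from fun x y => by ring,
    Real.cos_add, Real.cos_sub, Real.sin_add, Real.sin_sub]
  nlinarith [hη2, sq_nonneg e, sq_nonneg η, he2,
    Real.sin_sq_add_cos_sq u, Real.sin_sq_add_cos_sq ω]
end
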